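/- The tensor product of a block-positive operator and a separable positive operator is block positive: if E is block positive on a multipartite space H (with respect to parties A_1,…,A_m) and F is separable on another multipartite space H' (with respect to the same m parties), then E ⊗ F is block positive on H ⊗ H' with respect to the m parties, where party A_k holds its factors from both H and H'. -/

import Mathlib

open Matrix BigOperators ComplexOrder

noncomputable section

/-- Tensor product of a family of local operators, one per party/step. -/
def tensorFam {m : ℕ} {ι : Fin m → Type*} [∀ k, Fintype (ι k)]
    (A : (k : Fin m) → Matrix (ι k) (ι k) ℂ) :
    Matrix ((k : Fin m) → ι k) ((k : Fin m) → ι k) ℂ :=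
  Matrix.of fun i j => ∏ k, A k (i k) (j k)

/-- Separable operator: a sum of tensor products of positive semidefinite local operators. -/
def IsSep {m : ℕ} {ι : Fin m → Type*} [∀ k, Fintype (ι k)]
    (E : Matrix ((k : Fin m) → ι k) ((k : Fin m) → ι k) ℂ) : Prop :=
  ∃ (S : Finset ℕ) (A : ℕ → (k : Fin m) → Matrix (ι k) (ι k) ℂ),
    (∀ s ∈ S, ∀ k, (A s k).PosSemidef) ∧ E = ∑ s ∈ S, tensorFam (A s)

/-- Separable state: separable with trace one. -/
def IsSepState {m : ℕ} {ι : Fin m → Type*} [∀ k, Fintype (ι k)]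
    (σ : Matrix ((k : Fin m) → ι k) ((k : Fin m) → ι k) ℂ) : Prop :=
  IsSep σ ∧ σ.trace = 1

/-- Block positive: nonnegative mean value on every separable state. -/
def IsBlockPos {m : ℕ} {ι : Fin m → Type*} [∀ k, Fintype (ι k)]
    (E : Matrix ((k : Fin m) → ι k) ((k : Fin m) → ι k) ℂ) : Prop :=
  ∀ σ, IsSepState σ → 0 ≤ ((E * σ).trace).re

def IsPOVM {α N : Type*} [Fintype α] [Fintype N] [DecidableEq N]
    (M : α → Matrix N N ℂ) : Prop :=
  (∀ i, (M i).PosSemidef) ∧ ∑ i, M i = 1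

/-- Average success probability of a guessing strategy. -/
def succProb {α N : Type*} [Fintype α] [Fintype N]
    (η : α → ℝ) (ρ M : α → Matrix N N ℂ) : ℝ :=
  ∑ i, η i * ((ρ i * M i).trace).re
/-- Tensor product A ⊗ B of operators on two m-party spaces, with indices grouped so
that party k holds its factors from both spaces. -/
def pairTensor {m : ℕ} {ι ι' : Fin m → Type*} [∀ k, Fintype (ι k)] [∀ k, Fintype (ι' k)]
    (A : Matrix ((k : Fin m) → ι k) ((k : Fin m) → ι k) ℂ)
    (B : Matrix ((k : Fin m) → ι' k) ((k : Fin m) → ι' k) ℂ) :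
    Matrix ((k : Fin m) → ι k × ι' k) ((k : Fin m) → ι k × ι' k) ℂ :=
  Matrix.of fun i j =>
    A (fun k => (i k).1) (fun k => (j k).1) * B (fun k => (i k).2) (fun k => (j k).2)

/- ### Auxiliary lemmas -/

open scoped MatrixOrder in
lemma posSemidef_iff_eq_conjTranspose_mul_self' {N : Type*} [Fintype N]
    {A : Matrix N N ℂ} : A.PosSemidef ↔ ∃ B : Matrix N N ℂ, A = Bᴴ * B := by
  classical
  refine ⟨fun hA => ?_, fun ⟨B, hB⟩ => hB ▸ posSemidef_conjTranspose_mul_self B⟩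
  have h0 : 0 ≤ A := hA.nonneg
  refine ⟨CFC.sqrt A, ?_⟩
  rw [← Matrix.star_eq_conjTranspose, (CFC.sqrt_nonneg A).isSelfAdjoint.star_eq,
    CFC.sqrt_mul_sqrt_self A h0]

lemma psd_diag_nonneg {N : Type*} [Fintype N] [DecidableEq N] {A : Matrix N N ℂ}
    (hA : A.PosSemidef) (i : N) : 0 ≤ A i i := by
  simpa [dotProduct, Matrix.mulVec, Pi.single_apply] using hA.dotProduct_mulVec_nonneg (Pi.single i 1)

lemma psd_trace_nonneg {N : Type*} [Fintype N] [DecidableEq N] {A : Matrix N N ℂ}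
    (hA : A.PosSemidef) : 0 ≤ A.trace := by
  rw [Matrix.trace]
  exact Finset.sum_nonneg fun i _ => psd_diag_nonneg hA i

lemma psd_trace_zero {N : Type*} [Fintype N] [DecidableEq N] {A : Matrix N N ℂ}
    (hA : A.PosSemidef) (h : A.trace = 0) : A = 0 := by
  obtain ⟨B, rfl⟩ := posSemidef_iff_eq_conjTranspose_mul_self'.mp hA
  have key : (Bᴴ * B).trace = ((∑ j, ∑ i, Complex.normSq (B i j) : ℝ) : ℂ) := by
    push_cast
    simp [Matrix.trace, Matrix.diag, Matrix.mul_apply, Matrix.conjTranspose_apply,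
      Complex.normSq_eq_conj_mul_self]
  rw [key] at h
  have h2 : (∑ j, ∑ i, Complex.normSq (B i j) : ℝ) = 0 := by exact_mod_cast h
  have hB : B = 0 := by
    ext i j
    have h3 := (Finset.sum_eq_zero_iff_of_nonneg (fun j _ => Finset.sum_nonneg
      (fun i _ => Complex.normSq_nonneg (B i j)))).mp h2 j (Finset.mem_univ j)
    have h4 := (Finset.sum_eq_zero_iff_of_nonneg (fun i _ => Complex.normSq_nonneg (B i j))).mp
      h3 i (Finset.mem_univ i)
    simpa using Complex.normSq_eq_zero.mp h4
  simp [hB]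

lemma psd_real_smul {N : Type*} [Fintype N] {A : Matrix N N ℂ}
    (hA : A.PosSemidef) {r : ℝ} (hr : 0 ≤ r) : ((r : ℂ) • A).PosSemidef := by
  refine PosSemidef.of_dotProduct_mulVec_nonneg ?_ fun x => ?_
  · have : ((r : ℂ) • A)ᴴ = (starRingEnd ℂ) (r : ℂ) • Aᴴ := Matrix.conjTranspose_smul _ _
    rw [Matrix.IsHermitian, this, Complex.conj_ofReal, hA.1]
  · rw [Matrix.smul_mulVec, dotProduct_smul, smul_eq_mul]
    exact mul_nonneg (Complex.zero_le_real.mpr hr) (hA.dotProduct_mulVec_nonneg x)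

section TensorFam

variable {m : ℕ} {ι : Fin m → Type*} [∀ k, Fintype (ι k)] [∀ k, DecidableEq (ι k)]

omit [∀ k, DecidableEq (ι k)] in
lemma trace_tensorFam (A : (k : Fin m) → Matrix (ι k) (ι k) ℂ) :
    (tensorFam A).trace = ∏ k, (A k).trace := by
  simp only [Matrix.trace, Matrix.diag, tensorFam, Matrix.of_apply]
  rw [Finset.prod_univ_sum, Fintype.piFinset_univ]

omit [∀ k, DecidableEq (ι k)] in
lemma tensorFam_smul (c : Fin m → ℂ) (A : (k : Fin m) → Matrix (ι k) (ι k) ℂ) :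
    tensorFam (fun k => c k • A k) = (∏ k, c k) • tensorFam A := by
  ext i j
  simp [tensorFam, Finset.prod_mul_distrib, mul_comm]

omit [∀ k, DecidableEq (ι k)] in
lemma tensorFam_zero {k₀ : Fin m} (A : (k : Fin m) → Matrix (ι k) (ι k) ℂ)
    (h : A k₀ = 0) : tensorFam A = 0 := by
  ext i j
  exact Finset.prod_eq_zero (Finset.mem_univ k₀) (by simp [h])

lemma blockPos_prod (E : Matrix ((k : Fin m) → ι k) ((k : Fin m) → ι k) ℂ)
    (hEbp : IsBlockPos E) (A : (k : Fin m) → Matrix (ι k) (ι k) ℂ)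
    (hA : ∀ k, (A k).PosSemidef) : 0 ≤ ((E * tensorFam A).trace).re := by
  by_cases h0 : ∀ k, (A k).trace ≠ 0
  · set r : Fin m → ℝ := fun k => ((A k).trace).re with hr
    have htr : ∀ k, (A k).trace = ((r k : ℝ) : ℂ) := fun k =>
      Complex.eq_re_of_ofReal_le (by rw [Complex.ofReal_zero]; exact psd_trace_nonneg (hA k))
    have hrpos : ∀ k, 0 < r k := by
      intro k
      rcases lt_or_eq_of_le ((Complex.zero_le_real).mp (htr k ▸ psd_trace_nonneg (hA k))) with h | h
      · exact h
      · exact absurd (by rw [htr k, ← h]; simp) (h0 k)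
    set A' : (k : Fin m) → Matrix (ι k) (ι k) ℂ := fun k => (((r k)⁻¹ : ℝ) : ℂ) • A k with hA'def
    have hA' : ∀ k, (A' k).PosSemidef := fun k =>
      psd_real_smul (hA k) (inv_nonneg.mpr (hrpos k).le)
    have hstate : IsSepState (tensorFam A') := by
      refine ⟨⟨{0}, fun _ => A', fun s _ k => hA' k, by simp⟩, ?_⟩
      rw [trace_tensorFam]
      have : ∀ k, (A' k).trace = 1 := by
        intro k
        rw [hA'def]
        simp only [Matrix.trace_smul, smul_eq_mul, htr k]
        rw [← Complex.ofReal_mul, inv_mul_cancel₀ (hrpos k).ne']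
        simp
      simp [this]
    have key : tensorFam A' = ((∏ k, (r k)⁻¹ : ℝ) : ℂ) • tensorFam A := by
      rw [hA'def, tensorFam_smul]
      push_cast
      rfl
    have hbp := hEbp _ hstate
    rw [key, Matrix.mul_smul, Matrix.trace_smul, smul_eq_mul] at hbp
    rw [Complex.mul_re] at hbp
    simp only [Complex.ofReal_re, Complex.ofReal_im, zero_mul, sub_zero] at hbp
    have hprodpos : 0 < (∏ k, (r k)⁻¹ : ℝ) := Finset.prod_pos fun k _ => inv_pos.mpr (hrpos k)
    exact (mul_nonneg_iff_of_pos_left hprodpos).mp hbp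
  · push_neg at h0
    obtain ⟨k, hk⟩ := h0
    rw [tensorFam_zero A (psd_trace_zero (hA k) hk)]
    simp

end TensorFam

/-- Partial contraction of an operator `A` on a bipartite space against `B` on the
second factor. -/
def contract {α β : Type*} [Fintype α] [Fintype β]
    (A : Matrix (α × β) (α × β) ℂ) (B : Matrix β β ℂ) : Matrix α α ℂ :=
  Matrix.of fun x y => ∑ a, ∑ b, B a b * A (x, b) (y, a)

lemma contract_posSemidef {α β : Type*} [Fintype α] [Fintype β]
    {A : Matrix (α × β) (α × β) ℂ} {B : Matrix β β ℂ}
    (hA : A.PosSemidef) (hB : B.PosSemidef) : (contract A B).PosSemidef := by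
  refine PosSemidef.of_dotProduct_mulVec_nonneg ?_ ?_
  · show (contract A B)ᴴ = contract A B
    ext x y
    simp only [conjTranspose_apply, contract, Matrix.of_apply, star_sum, star_mul']
    rw [Finset.sum_comm]
    refine Finset.sum_congr rfl fun a _ => Finset.sum_congr rfl fun b _ => ?_
    rw [hB.1.apply, hA.1.apply, mul_comm]
  · intro x
    obtain ⟨N, hN⟩ := posSemidef_iff_eq_conjTranspose_mul_self'.mp hB
    have key : star x ⬝ᵥ (contract A B) *ᵥ x
        = ∑ c, star (fun w : α × β => x w.1 * star (N c w.2)) ⬝ᵥ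
            A *ᵥ (fun w : α × β => x w.1 * star (N c w.2)) := by
      simp only [dotProduct, mulVec, contract, Matrix.of_apply, hN, Matrix.mul_apply,
        conjTranspose_apply, Pi.star_apply, star_mul', star_star, Fintype.sum_prod_type,
        Finset.mul_sum, Finset.sum_mul]
      conv_lhs => enter [2, j, 2, i, 2, a]; rw [Finset.sum_comm]
      conv_lhs => enter [2, j, 2, i]; rw [Finset.sum_comm]
      conv_lhs => enter [2, j]; rw [Finset.sum_comm]
      rw [Finset.sum_comm]
      conv_lhs => enter [2, c, 2, j, 2, i]; rw [Finset.sum_comm]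
      conv_lhs => enter [2, c, 2, j]; rw [Finset.sum_comm]
      refine Finset.sum_congr rfl fun c _ => Finset.sum_congr rfl fun j _ =>
        Finset.sum_congr rfl fun b _ => Finset.sum_congr rfl fun i _ =>
        Finset.sum_congr rfl fun a _ => ?_
      ring
    rw [key]
    exact Finset.sum_nonneg fun c _ => hA.dotProduct_mulVec_nonneg _

lemma sum_pi_prod {m : ℕ} {γ γ' : Fin m → Type*} [∀ k, Fintype (γ k)] [∀ k, Fintype (γ' k)]
    (f : ((k : Fin m) → γ k × γ' k) → ℂ) :
    ∑ p, f p = ∑ u : (k : Fin m) → γ k, ∑ v : (k : Fin m) → γ' k, f (fun k => (u k, v k)) := by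
  have hpt := Fintype.sum_prod_type
    (f := fun (x : ((k : Fin m) → γ k) × ((k : Fin m) → γ' k)) => f (fun k => (x.1 k, x.2 k)))
  rw [← hpt]
  refine Fintype.sum_bijective (fun p => ((fun k => (p k).1, fun k => (p k).2) :
    ((k : Fin m) → γ k) × ((k : Fin m) → γ' k))) ⟨?_, ?_⟩ _ _ (fun p => rfl)
  · intro p q h
    funext k
    have h1 := congrArg (fun x => x.1 k) h
    have h2 := congrArg (fun x => x.2 k) h
    exact Prod.ext h1 h2
  · intro x
    exact ⟨fun k => (x.1 k, x.2 k), rfl⟩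

lemma trace_pairTensor {m : ℕ} {ι ι' : Fin m → Type*}
    [∀ k, Fintype (ι k)] [∀ k, Fintype (ι' k)]
    (E : Matrix ((k : Fin m) → ι k) ((k : Fin m) → ι k) ℂ)
    (A : (k : Fin m) → Matrix (ι k × ι' k) (ι k × ι' k) ℂ)
    (B : (k : Fin m) → Matrix (ι' k) (ι' k) ℂ) :
    (pairTensor E (tensorFam B) * tensorFam A).trace
      = (E * tensorFam (fun k => contract (A k) (B k))).trace := by
  simp only [Matrix.trace, Matrix.diag, Matrix.mul_apply, pairTensor, tensorFam, contract,
    Matrix.of_apply]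
  have hinner : ∀ i j : (k : Fin m) → ι k,
      (∏ k, ∑ a, ∑ b, B k a b * A k (j k, b) (i k, a))
        = ∑ r : (k : Fin m) → ι' k × ι' k,
            ∏ k, B k (r k).1 (r k).2 * A k (j k, (r k).2) (i k, (r k).1) := by
    intro i j
    calc (∏ k, ∑ a, ∑ b, B k a b * A k (j k, b) (i k, a))
        = ∏ k, ∑ c : ι' k × ι' k, B k c.1 c.2 * A k (j k, c.2) (i k, c.1) :=
          Finset.prod_congr rfl fun k _ =>
            (Fintype.sum_prod_type
              (f := fun (c : ι' k × ι' k) => B k c.1 c.2 * A k (j k, c.2) (i k, c.1))).symm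
      _ = _ := by rw [Finset.prod_univ_sum, Fintype.piFinset_univ]
  simp only [hinner, sum_pi_prod, Finset.mul_sum]
  refine Finset.sum_congr rfl fun u _ => ?_
  rw [Finset.sum_comm]
  refine Finset.sum_congr rfl fun j _ => Finset.sum_congr rfl fun a _ =>
    Finset.sum_congr rfl fun b _ => ?_
  rw [Finset.prod_mul_distrib]
  ring

/-- the tensor product of a block-positive operator and a separable
(positive) operator is block positive with respect to the m parties, where party k
holds its factors from both spaces. -/
theorem blockPos_tensor_sep {m : ℕ} {ι ι' : Fin m → Type*}
    [∀ k, Fintype (ι k)] [∀ k, Fintype (ι' k)]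
    [∀ k, DecidableEq (ι k)] [∀ k, DecidableEq (ι' k)]
    (E : Matrix ((k : Fin m) → ι k) ((k : Fin m) → ι k) ℂ)
    (F : Matrix ((k : Fin m) → ι' k) ((k : Fin m) → ι' k) ℂ)
    (hE : E.IsHermitian) (hEbp : IsBlockPos E) (hF : IsSep F) :
    IsBlockPos (ι := fun k => ι k × ι' k) (pairTensor E F) := by
  obtain ⟨T, B, hB, rfl⟩ := hF
  intro σ hσ
  obtain ⟨⟨S, A, hA, rfl⟩, -⟩ := hσ
  have h1 : pairTensor E (∑ t ∈ T, tensorFam (B t))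
      = ∑ t ∈ T, pairTensor E (tensorFam (B t)) := by
    ext i j
    simp [pairTensor, Finset.mul_sum, Matrix.sum_apply]
  rw [h1, Finset.sum_mul_sum]
  simp only [Matrix.trace_sum, Complex.re_sum]
  refine Finset.sum_nonneg fun t ht => Finset.sum_nonneg fun s hs => ?_
  rw [trace_pairTensor]
  exact blockPos_prod E hEbp _ (fun k => contract_posSemidef (hA s hs k) (hB t ht k))
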